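/- arXiv:1012.3836 — 2 statements merged into one kernel-verified Lean document; each statement's English description precedes it below -/
import Mathlib

section
/- Let σ ∈ ℝ, T > 0, and let g be a real-valued integrable function on [a,b] ⊆ [2,∞) with ∫_a^b g(x)² x^{1−2σ} dx < ∞. Then ∫_0^T |∫_a^b g(x) x^{−σ−it} dx|² dt ≤ 2π ∫_a^b g(x)² x^{1−2σ} dx. -/
open Complex MeasureTheory Set Real

lemma lemB (F : ℝ → ℂ) (hF : Continuous F) (s C : ℝ) (hs : 0 < s) (hC : 0 ≤ C)
    (hsum : ∀ θ : ℝ, ∑' n : ℤ, ‖F (θ + n * s)‖ ^ 2 = C)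
    (hsumm : ∀ θ : ℝ, Summable fun n : ℤ => ‖F (θ + n * s)‖ ^ 2)
    (T : ℝ) (hT : 0 < T) :
    ∫ t in (0:ℝ)..T, ‖F t‖ ^ 2 ≤ s * C := by
  have hmeas : ∀ t : ℝ, (0:ℝ) ≤ ‖F t‖ ^ 2 := fun t => by positivity
  -- full-line lintegral
  have key : ∫⁻ t, ENNReal.ofReal (‖F t‖ ^ 2) = ENNReal.ofReal (s * C) := by
    have hcover : ⋃ n : ℤ, Ioc ((n : ℤ) • s) ((n + 1 : ℤ) • s) = univ := iUnion_Ioc_zsmul hs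
    have hdisj : Pairwise (Function.onFun Disjoint fun n : ℤ => Ioc ((n : ℤ) • s) ((n+1 : ℤ) • s)) := by
      intro m n hmn
      simp only [Function.onFun]
      rw [Set.Ioc_disjoint_Ioc]
      rcases lt_or_gt_of_ne hmn with h | h
      · refine le_trans (min_le_left _ _) (le_max_of_le_right ?_)
        have h1 : ((m:ℝ)+1) ≤ (n:ℝ) := by exact_mod_cast (h : m + 1 ≤ n)
        simp only [zsmul_eq_mul]
        push_cast
        nlinarith
      · refine le_trans (min_le_right _ _) (le_max_of_le_left ?_)
        have h1 : ((n:ℝ)+1) ≤ (m:ℝ) := by exact_mod_cast (h : n + 1 ≤ m)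
        simp only [zsmul_eq_mul]
        push_cast
        nlinarith
    have hm : ∀ n : ℤ, MeasurableSet (Ioc ((n : ℤ) • s) ((n+1 : ℤ) • s)) := fun n => measurableSet_Ioc
    calc ∫⁻ t, ENNReal.ofReal (‖F t‖ ^ 2)
        = ∫⁻ t in ⋃ n : ℤ, Ioc ((n:ℤ) • s) ((n+1:ℤ) • s), ENNReal.ofReal (‖F t‖ ^ 2) := by
          rw [hcover, Measure.restrict_univ]
      _ = ∑' n : ℤ, ∫⁻ t in Ioc ((n:ℤ) • s) ((n+1:ℤ) • s), ENNReal.ofReal (‖F t‖ ^ 2) := by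
          rw [lintegral_iUnion hm hdisj]
      _ = ∑' n : ℤ, ∫⁻ θ in Ioc 0 s, ENNReal.ofReal (‖F (θ + n * s)‖ ^ 2) := by
          congr 1; funext n
          have mp : MeasurePreserving (fun x : ℝ => x + (n : ℝ) * s) volume volume :=
            measurePreserving_add_right volume _
          have emb : MeasurableEmbedding (fun x : ℝ => x + (n : ℝ) * s) :=
            (MeasurableEquiv.addRight ((n : ℝ) * s)).measurableEmbedding
          have := mp.setLIntegral_comp_emb emb (fun t => ENNReal.ofReal (‖F t‖ ^ 2)) (Ioc 0 s)
          rw [this]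
          congr 1
          have : (fun x : ℝ => x + (n:ℝ) * s) '' Ioc 0 s = Ioc ((n:ℝ)*s) (s + (n:ℝ)*s) := by
            simpa using Set.image_add_const_Ioc ((n:ℝ)*s) 0 s
          rw [this]
          congr 1 <;> simp [add_smul, add_comm, mul_comm]
      _ = ∫⁻ θ in Ioc 0 s, ∑' n : ℤ, ENNReal.ofReal (‖F (θ + n * s)‖ ^ 2) := by
          rw [lintegral_tsum]
          intro n
          exact (ENNReal.continuous_ofReal.comp ((hF.norm.pow 2).comp (by continuity))).measurable.aemeasurable
      _ = ∫⁻ θ in Ioc 0 s, ENNReal.ofReal C := by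
          congr 1; funext θ
          rw [← ENNReal.ofReal_tsum_of_nonneg (fun n => hmeas _) (hsumm θ), hsum θ]
      _ = ENNReal.ofReal (s * C) := by
          rw [setLIntegral_const, Real.volume_Ioc]
          rw [← ENNReal.ofReal_mul hC]
          rw [mul_comm, sub_zero]
  -- conclude
  have hint : ∫ t in (0:ℝ)..T, ‖F t‖ ^ 2 = (∫⁻ t in Ioc 0 T, ENNReal.ofReal (‖F t‖ ^ 2)).toReal := by
    rw [intervalIntegral.integral_of_le hT.le]
    rw [integral_eq_lintegral_of_nonneg_ae (ae_of_all _ fun t => hmeas t)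
      ((hF.norm.pow 2).aestronglyMeasurable)]
  rw [hint]
  have hle : (∫⁻ t in Ioc 0 T, ENNReal.ofReal (‖F t‖ ^ 2)) ≤ ENNReal.ofReal (s * C) := by
    rw [← key]
    exact setLIntegral_le_lintegral _ _
  calc (∫⁻ t in Ioc 0 T, ENNReal.ofReal (‖F t‖ ^ 2)).toReal
      ≤ (ENNReal.ofReal (s * C)).toReal := ENNReal.toReal_mono ENNReal.ofReal_ne_top hle
    _ = s * C := ENNReal.toReal_ofReal (by positivity)

lemma lemA' (c d : ℝ) (hcd : c < d) (h : ℝ → ℂ) (hsm : StronglyMeasurable h)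
    (hh1 : IntegrableOn h (Ioc c d))
    (hh2 : IntegrableOn (fun u => ‖h u‖ ^ 2) (Ioc c d)) (θ : ℝ) :
    HasSum (fun n : ℤ =>
        ‖∫ u in Ioc c d, h u * Complex.exp (-(((θ + n * (2 * π / (d - c))) : ℝ) * u) * I)‖ ^ 2)
      ((d - c) * ∫ u in Ioc c d, ‖h u‖ ^ 2) := by
  set L : ℝ := d - c with hLdef
  have hL : 0 < L := sub_pos.mpr hcd
  haveI : Fact (0 < L) := ⟨hL⟩
  have hceq : c + L = d := by simp [hLdef]
  set hθ : ℝ → ℂ := fun u => h u * Complex.exp (-((θ * u : ℝ)) * I) with hθdef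
  have hsmθ : StronglyMeasurable hθ := by
    apply hsm.mul
    exact (Complex.continuous_exp.comp (by continuity)).stronglyMeasurable
  have hnormθ : ∀ u, ‖hθ u‖ = ‖h u‖ := by
    intro u
    simp [hθdef, norm_mul, Complex.norm_exp]
  set fθ : AddCircle L → ℂ := AddCircle.liftIoc L c hθ with hfθdef
  have hlift : ∀ u ∈ Ioc c d, fθ (u : AddCircle L) = hθ u := by
    intro u hu
    exact AddCircle.liftIoc_coe_apply (by rw [hceq]; exact hu)
  have hsmf : StronglyMeasurable fθ := by
    have hm : Measurable (fun z : AddCircle L => ((AddCircle.equivIoc L c z : ℝ))) :=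
      measurable_subtype_coe.comp (AddCircle.measurableEquivIoc L c).measurable
    exact hsmθ.comp_measurable hm
  -- Memℒp of hθ on the interval
  have hmemθ : MemLp hθ 2 (volume.restrict (Ioc c d)) := by
    have hmemh : MemLp h 2 (volume.restrict (Ioc c d)) :=
      (memLp_two_iff_integrable_sq_norm hh1.1).mpr hh2
    exact hmemh.of_le hsmθ.aestronglyMeasurable (ae_of_all _ fun u => le_of_eq (hnormθ u))
  -- Memℒp of fθ on the circle wrt volume
  have hmemvol : MemLp fθ 2 (volume : Measure (AddCircle L)) := by
    refine ⟨hsmf.aestronglyMeasurable, ?_⟩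
    rw [← (AddCircle.measurePreserving_mk L c).map_eq]
    rw [eLpNorm_map_measure (hsmf.aestronglyMeasurable.mono_measure le_rfl)
      (AddCircle.measurable_mk').aemeasurable]
    have : (fθ ∘ (QuotientAddGroup.mk : ℝ → AddCircle L)) =ᵐ[volume.restrict (Ioc c (c + L))] hθ := by
      filter_upwards [ae_restrict_mem measurableSet_Ioc] with u hu
      exact hlift u (by rwa [hceq] at hu)
    rw [eLpNorm_congr_ae this, hceq]
    exact hmemθ.2
  have hhaar : (AddCircle.haarAddCircle : Measure (AddCircle L)) = (ENNReal.ofReal L)⁻¹ • volume := by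
    rw [AddCircle.volume_eq_smul_haarAddCircle, smul_smul,
      ENNReal.inv_mul_cancel (ENNReal.ofReal_pos.mpr hL).ne' ENNReal.ofReal_ne_top, one_smul]
  have hmem : MemLp fθ 2 (AddCircle.haarAddCircle : Measure (AddCircle L)) := by
    rw [hhaar]
    exact hmemvol.smul_measure (ENNReal.inv_ne_top.mpr (ENNReal.ofReal_pos.mpr hL).ne')
  set f : Lp ℂ 2 (AddCircle.haarAddCircle : Measure (AddCircle L)) := hmem.toLp fθ with hfdef
  have hfae : ⇑f =ᵐ[AddCircle.haarAddCircle] fθ := hmem.coeFn_toLp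
  -- Fourier coefficients agree
  have hcoeff : ∀ n : ℤ, fourierCoeff (⇑f) n = fourierCoeff fθ n := by
    intro n
    unfold fourierCoeff
    refine integral_congr_ae ?_
    filter_upwards [hfae] with t ht
    rw [ht]
  -- Parseval
  have hpar := tsum_sq_fourierCoeff f
  -- RHS of Parseval
  have hR : ∫ t : AddCircle L, ‖f t‖ ^ 2 ∂AddCircle.haarAddCircle
      = L⁻¹ * ∫ u in Ioc c d, ‖h u‖ ^ 2 := by
    have h1 : ∫ t : AddCircle L, ‖f t‖ ^ 2 ∂AddCircle.haarAddCircle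
        = ∫ t : AddCircle L, ‖fθ t‖ ^ 2 ∂AddCircle.haarAddCircle := by
      refine integral_congr_ae ?_
      filter_upwards [hfae] with t ht
      rw [ht]
    have h2 : ∫ t : AddCircle L, ‖fθ t‖ ^ 2 ∂(volume : Measure (AddCircle L))
        = ∫ u in Ioc c d, ‖h u‖ ^ 2 := by
      rw [← hceq, ← AddCircle.integral_preimage L c (fun z => ‖fθ z‖ ^ 2)]
      rw [hceq]
      refine setIntegral_congr_fun measurableSet_Ioc fun u hu => ?_
      rw [hlift u hu, hnormθ u]
    rw [h1, ← h2, AddCircle.volume_eq_smul_haarAddCircle, integral_smul_measure]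
    rw [ENNReal.toReal_ofReal hL.le]
    rw [smul_eq_mul, ← mul_assoc, inv_mul_cancel₀ hL.ne', one_mul]
  -- Compute coefficients
  have hcval : ∀ n : ℤ, fourierCoeff fθ n
      = (1 / L : ℝ) • ∫ u in Ioc c d, h u * Complex.exp (-(((θ + n * (2 * π / L)) : ℝ) * u) * I) := by
    intro n
    rw [show fθ = AddCircle.liftIoc L c hθ from rfl, fourierCoeff_liftIoc_eq,
      fourierCoeffOn_eq_integral]
    have harg : c + L = d := hceq
    rw [show (c + L - c) = L by ring]
    congr 1
    rw [intervalIntegral.integral_of_le (by linarith : c ≤ c + L), harg]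
    refine setIntegral_congr_fun measurableSet_Ioc fun u hu => ?_
    simp only [hθdef]
    rw [fourier_coe_apply, smul_eq_mul, mul_left_comm, ← Complex.exp_add]
    congr 1
    congr 1
    have hL0 : (L : ℂ) ≠ 0 := Complex.ofReal_ne_zero.mpr hL.ne'
    push_cast
    field_simp
    ring
  -- Summability
  have hsummable : Summable fun n : ℤ => ‖fourierCoeff fθ n‖ ^ 2 := by
    have h1 := (lp.memℓp (fourierBasis.repr f)).summable (p := 2) (by norm_num)
    refine h1.congr fun n => ?_
    rw [fourierBasis_repr, hcoeff n]
    norm_num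
  -- Assemble
  have htsum : ∑' n : ℤ, ‖fourierCoeff fθ n‖ ^ 2 = L⁻¹ * ∫ u in Ioc c d, ‖h u‖ ^ 2 := by
    rw [← hR, ← hpar]
    exact tsum_congr fun n => by rw [hcoeff n]
  have hhs : HasSum (fun n : ℤ => ‖fourierCoeff fθ n‖ ^ 2) (L⁻¹ * ∫ u in Ioc c d, ‖h u‖ ^ 2) := by
    rw [← htsum]; exact hsummable.hasSum
  have hfinal := hhs.mul_left (L ^ 2)
  have heq : ∀ n : ℤ, L ^ 2 * ‖fourierCoeff fθ n‖ ^ 2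
      = ‖∫ u in Ioc c d, h u * Complex.exp (-(((θ + n * (2 * π / L)) : ℝ) * u) * I)‖ ^ 2 := by
    intro n
    rw [hcval n, norm_smul, mul_pow]
    rw [Real.norm_eq_abs, abs_of_pos (by positivity : (0:ℝ) < 1 / L)]
    rw [div_pow, one_pow]
    field_simp
    congr 2
    refine integral_congr_ae (ae_of_all _ fun u => ?_)
    ring_nf
  have hval : L ^ 2 * (L⁻¹ * ∫ u in Ioc c d, ‖h u‖ ^ 2) = L * ∫ u in Ioc c d, ‖h u‖ ^ 2 := by
    field_simp
  rw [funext heq, hval] at hfinal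
  exact hfinal

lemma lemA (c d : ℝ) (hcd : c < d) (h : ℝ → ℂ)
    (hh1 : IntegrableOn h (Ioc c d))
    (hh2 : IntegrableOn (fun u => ‖h u‖ ^ 2) (Ioc c d)) (θ : ℝ) :
    HasSum (fun n : ℤ =>
        ‖∫ u in Ioc c d, h u * Complex.exp (-(((θ + n * (2 * π / (d - c))) : ℝ) * u) * I)‖ ^ 2)
      ((d - c) * ∫ u in Ioc c d, ‖h u‖ ^ 2) := by
  set h' : ℝ → ℂ := hh1.1.mk h with hh'def
  have hsm' : StronglyMeasurable h' := hh1.1.stronglyMeasurable_mk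
  have hae : h =ᵐ[volume.restrict (Ioc c d)] h' := hh1.1.ae_eq_mk
  have hh1' : IntegrableOn h' (Ioc c d) := hh1.congr hae
  have hh2' : IntegrableOn (fun u => ‖h' u‖ ^ 2) (Ioc c d) :=
    hh2.congr (by filter_upwards [hae] with u hu; simp only [hu])
  have key := lemA' c d hcd h' hsm' hh1' hh2' θ
  have e1 : ∀ n : ℤ, (∫ u in Ioc c d, h' u * Complex.exp (-(((θ + n * (2 * π / (d - c))) : ℝ) * u) * I))
      = ∫ u in Ioc c d, h u * Complex.exp (-(((θ + n * (2 * π / (d - c))) : ℝ) * u) * I) := by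
    intro n
    refine integral_congr_ae ?_
    filter_upwards [hae] with u hu
    rw [hu]
  have e2 : (∫ u in Ioc c d, ‖h' u‖ ^ 2) = ∫ u in Ioc c d, ‖h u‖ ^ 2 := by
    refine integral_congr_ae ?_
    filter_upwards [hae] with u hu
    rw [hu]
  simp_rw [e1, e2] at key
  exact key

theorem mean_square_modified_mellin_bound (σ T a b : ℝ) (hT : 0 < T) (ha : 2 ≤ a) (hab : a ≤ b)
    (g : ℝ → ℝ) (hg : IntegrableOn g (Icc a b))
    (hg2 : IntegrableOn (fun x : ℝ => g x ^ 2 * x ^ (1 - 2 * σ)) (Icc a b)) :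
    ∫ t in (0:ℝ)..T, ‖∫ x in Icc a b, (g x : ℂ) * (x : ℂ) ^ (-(σ + t * I) : ℂ)‖ ^ 2
      ≤ 2 * π * ∫ x in Icc a b, g x ^ 2 * x ^ (1 - 2 * σ) := by
  rcases eq_or_lt_of_le hab with rfl | hab'
  · simp [Icc_self, Measure.restrict_singleton, Real.volume_singleton]
  have ha0 : (0:ℝ) < a := by linarith
  have hb0 : (0:ℝ) < b := by linarith
  set c : ℝ := Real.log a with hcdef
  set d : ℝ := Real.log b with hddef
  have hcd : c < d := Real.log_lt_log ha0 hab'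
  -- the transformed function
  set h : ℝ → ℂ := fun u => ((g (Real.exp u) * Real.exp ((1 - σ) * u) : ℝ) : ℂ) with hdef
  -- change of variables setup
  have himg : Real.exp '' Ioc c d = Ioc a b := by
    ext x
    constructor
    · rintro ⟨u, hu, rfl⟩
      exact ⟨by calc a = Real.exp c := (Real.exp_log ha0).symm
                  _ < Real.exp u := Real.exp_lt_exp.mpr hu.1,
             by calc Real.exp u ≤ Real.exp d := Real.exp_le_exp.mpr hu.2
                  _ = b := Real.exp_log hb0⟩
    · intro hx
      have hx0 : (0:ℝ) < x := lt_trans ha0 hx.1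
      exact ⟨Real.log x, ⟨Real.log_lt_log ha0 hx.1, Real.log_le_log hx0 hx.2⟩, Real.exp_log hx0⟩
  have hder : ∀ u ∈ Ioc c d, HasDerivWithinAt Real.exp (Real.exp u) (Ioc c d) u :=
    fun u _ => (Real.hasDerivAt_exp u).hasDerivWithinAt
  have hinj : InjOn Real.exp (Ioc c d) := Real.exp_injective.injOn
  have hCOVc : ∀ φ : ℝ → ℂ, (∫ x in Ioc a b, φ x) = ∫ u in Ioc c d, Real.exp u • φ (Real.exp u) := by
    intro φ
    rw [← himg, integral_image_eq_integral_abs_deriv_smul measurableSet_Ioc hder hinj]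
    refine setIntegral_congr_fun measurableSet_Ioc fun u _ => ?_
    rw [abs_of_pos (Real.exp_pos u)]
  have hCOVr : ∀ φ : ℝ → ℝ, (∫ x in Ioc a b, φ x) = ∫ u in Ioc c d, Real.exp u • φ (Real.exp u) := by
    intro φ
    rw [← himg, integral_image_eq_integral_abs_deriv_smul measurableSet_Ioc hder hinj]
    refine setIntegral_congr_fun measurableSet_Ioc fun u _ => ?_
    rw [abs_of_pos (Real.exp_pos u)]
  have hexpsq : ∀ u : ℝ, Real.exp u * Real.exp (u * (1 - 2*σ)) = Real.exp ((1-σ)*u) ^ 2 := by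
    intro u
    rw [sq, ← Real.exp_add, ← Real.exp_add]
    congr 1
    ring
  -- integrability of h
  have hrpow_cont : ContinuousOn (fun x : ℝ => x ^ (-σ)) (Icc a b) := fun x hx =>
    (Real.continuousAt_rpow_const x (-σ) (Or.inl (ne_of_gt (lt_of_lt_of_le ha0 hx.1)))).continuousWithinAt
  have hφint : IntegrableOn (fun x => g x * x ^ (-σ)) (Ioc a b) :=
    (hg.mul_continuousOn hrpow_cont isCompact_Icc).mono_set Ioc_subset_Icc_self
  have hint1 : IntegrableOn h (Ioc c d) := by
    have := (integrableOn_image_iff_integrableOn_abs_deriv_smul measurableSet_Ioc hder hinj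
      (fun x => g x * x ^ (-σ))).mp (by rwa [himg])
    have heq : EqOn (fun u => |Real.exp u| • (g (Real.exp u) * Real.exp u ^ (-σ)))
        (fun u => (g (Real.exp u) * Real.exp ((1 - σ) * u) : ℝ)) (Ioc c d) := by
      intro u _
      simp only [abs_of_pos (Real.exp_pos u), smul_eq_mul]
      rw [Real.rpow_def_of_pos (Real.exp_pos u), Real.log_exp,
        show (1 - σ) * u = u + u * -σ by ring, Real.exp_add]
      ring
    exact (Integrable.ofReal ((this.congr_fun heq measurableSet_Ioc) : _))
  have hint2 : IntegrableOn (fun u => ‖h u‖ ^ 2) (Ioc c d) := by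
    have := (integrableOn_image_iff_integrableOn_abs_deriv_smul measurableSet_Ioc hder hinj
      (fun x => g x ^ 2 * x ^ (1 - 2 * σ))).mp
      (by rw [himg]; exact hg2.mono_set Ioc_subset_Icc_self)
    refine this.congr_fun (fun u _ => ?_) measurableSet_Ioc
    simp only [abs_of_pos (Real.exp_pos u), smul_eq_mul, hdef, Complex.norm_real,
      Real.norm_eq_abs, _root_.sq_abs]
    rw [Real.rpow_def_of_pos (Real.exp_pos u), Real.log_exp, mul_pow, ← hexpsq u]
    ring
  -- value of the weighted square integral
  have hval2 : (∫ x in Icc a b, g x ^ 2 * x ^ (1 - 2 * σ)) = ∫ u in Ioc c d, ‖h u‖ ^ 2 := by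
    rw [integral_Icc_eq_integral_Ioc, hCOVr (fun x => g x ^ 2 * x ^ (1 - 2 * σ))]
    refine setIntegral_congr_fun measurableSet_Ioc fun u _ => ?_
    simp only [smul_eq_mul, hdef, Complex.norm_real, Real.norm_eq_abs, _root_.sq_abs]
    rw [Real.rpow_def_of_pos (Real.exp_pos u), Real.log_exp, mul_pow, ← hexpsq u]
    ring
  -- inner integral identification
  have hinner : ∀ t : ℝ, (∫ x in Icc a b, (g x : ℂ) * (x : ℂ) ^ (-(σ + t * I) : ℂ))
      = ∫ u in Ioc c d, h u * Complex.exp (-((t : ℂ) * (u : ℂ)) * I) := by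
    intro t
    rw [integral_Icc_eq_integral_Ioc, hCOVc (fun x => (g x : ℂ) * (x : ℂ) ^ (-(σ + t * I) : ℂ))]
    refine setIntegral_congr_fun measurableSet_Ioc fun u _ => ?_
    have hexp0 : ((Real.exp u : ℝ) : ℂ) ≠ 0 := Complex.ofReal_ne_zero.mpr (Real.exp_pos u).ne'
    rw [Complex.cpow_def_of_ne_zero hexp0]
    rw [show Complex.log ((Real.exp u : ℝ) : ℂ) = (u : ℂ) by
      rw [← Complex.ofReal_log (Real.exp_pos u).le, Real.log_exp]]
    simp only [hdef, Complex.real_smul]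
    push_cast
    rw [mul_left_comm, ← Complex.exp_add, mul_assoc, ← Complex.exp_add]
    congr 1
    ring
  -- continuity of the Fourier-type integral
  have hFcont : Continuous fun t : ℝ => ∫ u in Ioc c d, h u * Complex.exp (-((t : ℂ) * (u : ℂ)) * I) := by
    apply continuous_of_dominated (bound := fun u => ‖h u‖)
    · intro t
      have hc : Continuous fun u : ℝ => -((t : ℂ) * (u : ℂ)) * I :=
        ((continuous_const.mul Complex.continuous_ofReal).neg).mul continuous_const
      exact hint1.1.mul ((Complex.continuous_exp.comp hc).aestronglyMeasurable)
    · intro t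
      refine ae_of_all _ fun u => ?_
      rw [norm_mul]
      have h1 : ‖Complex.exp (-((t : ℂ) * (u : ℂ)) * I)‖ = 1 := by
        rw [show (-((t : ℂ) * (u : ℂ)) * I) = ((-(t * u) : ℝ) : ℂ) * I by push_cast; ring]
        exact Complex.norm_exp_ofReal_mul_I _
      rw [h1, mul_one]
    · exact hint1.norm
    · refine ae_of_all _ fun u => ?_
      have hc : Continuous fun t : ℝ => -((t : ℂ) * (u : ℂ)) * I :=
        ((Complex.continuous_ofReal.mul continuous_const).neg).mul continuous_const
      exact continuous_const.mul (Complex.continuous_exp.comp hc)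
  have hL : 0 < d - c := sub_pos.mpr hcd
  have hs : 0 < 2 * π / (d - c) := by
    have := Real.pi_pos
    positivity
  have hIpos : 0 ≤ ∫ u in Ioc c d, ‖h u‖ ^ 2 :=
    setIntegral_nonneg measurableSet_Ioc fun u _ => by positivity
  have hC : 0 ≤ (d - c) * ∫ u in Ioc c d, ‖h u‖ ^ 2 := mul_nonneg hL.le hIpos
  have key := lemB _ hFcont (2 * π / (d - c)) ((d - c) * ∫ u in Ioc c d, ‖h u‖ ^ 2) hs hC
    (fun θ => (lemA c d hcd h hint1 hint2 θ).tsum_eq)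
    (fun θ => (lemA c d hcd h hint1 hint2 θ).summable) T hT
  rw [hval2]
  calc ∫ t in (0:ℝ)..T, ‖∫ x in Icc a b, (g x : ℂ) * (x : ℂ) ^ (-(σ + t * I) : ℂ)‖ ^ 2
      = ∫ t in (0:ℝ)..T, ‖∫ u in Ioc c d, h u * Complex.exp (-((t : ℂ) * (u : ℂ)) * I)‖ ^ 2 := by
        refine intervalIntegral.integral_congr fun t _ => ?_
        rw [hinner t]
    _ ≤ (2 * π / (d - c)) * ((d - c) * ∫ u in Ioc c d, ‖h u‖ ^ 2) := key
    _ = 2 * π * ∫ u in Ioc c d, ‖h u‖ ^ 2 := by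
        field_simp
end

section
/- For Re(x) > 0 and any c > 0, e^{−x} = (1/2πi) ∫_{(c)} Γ(w) x^{−w} dw, where ∫_{(c)} denotes integration over the vertical line Re(w) = c. -/
open Complex MeasureTheory Set Filter Metric

namespace MellinExpAux

lemma norm_integrand {w x : ℂ} {t : ℝ} (ht : 0 < t) :
    ‖(t : ℂ) ^ (w - 1) * Complex.exp (-x * t)‖ = t ^ (w.re - 1) * Real.exp (-x.re * t) := by
  have h1 : (-x * (t : ℂ)).re = -x.re * t := by simp [Complex.mul_re]
  have h2 : (w - 1).re = w.re - 1 := by simp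
  rw [norm_mul,
    Complex.norm_cpow_eq_rpow_re_of_pos ht, Complex.norm_exp, h1, h2]

lemma contOn {w x : ℂ} :
    ContinuousOn (fun t : ℝ => (t : ℂ) ^ (w - 1) * Complex.exp (-x * t)) (Ioi 0) := by
  intro t ht
  apply ContinuousAt.continuousWithinAt
  apply ContinuousAt.mul
  · exact (Complex.continuous_ofReal.continuousAt).cpow continuousAt_const
      (Or.inl (by simpa using ht))
  · exact (Complex.continuous_exp.comp ((continuous_const.mul
      Complex.continuous_ofReal))).continuousAt

lemma integrableAux {w x : ℂ} (hw : 0 < w.re) (hx : 0 < x.re) :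
    IntegrableOn (fun t : ℝ => (t : ℂ) ^ (w - 1) * Complex.exp (-x * t)) (Ioi 0) := by
  have base : IntegrableOn (fun t : ℝ => t ^ (w.re - 1) * Real.exp (-x.re * t)) (Ioi 0) := by
    simpa using integrableOn_rpow_mul_exp_neg_mul_rpow
      (by linarith : (-1 : ℝ) < w.re - 1) (zero_lt_one : (0:ℝ) < 1) hx
  refine base.integrable.mono' (contOn.aestronglyMeasurable measurableSet_Ioi) ?_
  filter_upwards [ae_restrict_mem measurableSet_Ioi] with t ht
  rw [norm_integrand ht]

lemma real_case {w : ℂ} (hw : 0 < w.re) {r : ℝ} (hr : 0 < r) :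
    ∫ t : ℝ in Ioi 0, (t : ℂ) ^ (w - 1) * Complex.exp (-(r : ℂ) * t) =
      Complex.Gamma w * (r : ℂ) ^ (-w) := by
  have h := Complex.integral_cpow_mul_exp_neg_mul_Ioi hw hr
  have h2 : ((1 : ℂ) / r) ^ w = (r : ℂ) ^ (-w) := by
    have harg : (r : ℂ).arg ≠ Real.pi := by
      rw [Complex.arg_ofReal_of_nonneg hr.le]
      exact (Real.pi_ne_zero).symm
    rw [one_div, Complex.inv_cpow _ _ harg, ← Complex.cpow_neg]
  rw [← h2, mul_comm, ← h]
  congr 1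
  ext t
  rw [neg_mul]

lemma diffAux {w : ℂ} (hw : 0 < w.re) {x₀ : ℂ} (hx₀ : 0 < x₀.re) :
    DifferentiableAt ℂ
      (fun x : ℂ => ∫ t : ℝ in Ioi 0, (t : ℂ) ^ (w - 1) * Complex.exp (-x * t)) x₀ := by
  set ε : ℝ := x₀.re / 2 with hε_def
  have hε : 0 < ε := by positivity
  have hre : ∀ x ∈ ball x₀ ε, ε ≤ x.re := by
    intro x hxball
    have h1 : |(x - x₀).re| ≤ ‖x - x₀‖ := Complex.abs_re_le_norm _
    rw [mem_ball, Complex.dist_eq] at hxball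
    have := abs_le.mp (h1.trans hxball.le)
    simp only [Complex.sub_re] at this
    linarith [this.1]
  have key := hasDerivAt_integral_of_dominated_loc_of_deriv_le (μ := volume.restrict (Ioi 0))
    (F := fun (x : ℂ) (t : ℝ) => (t : ℂ) ^ (w - 1) * Complex.exp (-x * t))
    (F' := fun (x : ℂ) (t : ℝ) => ((t : ℂ) ^ (w - 1) * Complex.exp (-x * t)) * (-1 * t))
    (bound := fun t : ℝ => t ^ w.re * Real.exp (-ε * t)) (x₀ := x₀) (ball_mem_nhds x₀ hε)
    (Filter.Eventually.of_forall fun x =>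
      contOn.aestronglyMeasurable measurableSet_Ioi)
    (integrableAux hw hx₀)
    ?_ ?_ ?_ ?_
  · exact key.2.differentiableAt
  · -- measurability of F' x₀
    apply ContinuousOn.aestronglyMeasurable _ measurableSet_Ioi
    exact contOn.mul ((continuous_const.mul Complex.continuous_ofReal).continuousOn)
  · -- bound
    filter_upwards [ae_restrict_mem measurableSet_Ioi] with t ht
    intro x hxball
    have hxre := hre x hxball
    have ht' : (0 : ℝ) < t := ht
    have e0 : ‖((-1 : ℂ) * t)‖ = t := by
      have : ((-1 : ℂ)) * t = -(t : ℂ) := by ring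
      rw [this, norm_neg, Complex.norm_real, Real.norm_eq_abs, abs_of_pos ht']
    have e1 : ‖((t : ℂ) ^ (w - 1) * Complex.exp (-x * t)) * (-1 * t)‖
        = t ^ (w.re - 1) * Real.exp (-x.re * t) * t := by
      rw [norm_mul, norm_integrand ht', e0]
    rw [e1]
    have h3 : t ^ (w.re - 1) * Real.exp (-x.re * t) * t
        = t ^ w.re * Real.exp (-x.re * t) := by
      rw [show (w.re : ℝ) = w.re - 1 + 1 by ring, Real.rpow_add_one ht'.ne']
      ring
    rw [h3]
    have h4 : Real.exp (-x.re * t) ≤ Real.exp (-ε * t) := by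
      apply Real.exp_le_exp.mpr
      nlinarith
    have h5 : 0 ≤ t ^ w.re := Real.rpow_nonneg ht'.le _
    exact mul_le_mul_of_nonneg_left h4 h5
  · -- integrability of bound
    have hb : IntegrableOn (fun t : ℝ => t ^ w.re * Real.exp (-ε * t)) (Ioi 0) := by
      simpa using integrableOn_rpow_mul_exp_neg_mul_rpow
        (by linarith : (-1 : ℝ) < w.re) (zero_lt_one : (0:ℝ) < 1) hε
    exact hb
  · -- differentiability
    filter_upwards with t
    intro x hxball
    have h := (((hasDerivAt_neg x).mul_const (t : ℂ)).cexp).const_mul ((t : ℂ) ^ (w - 1))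
    exact h.congr_deriv (by ring)

lemma key {w : ℂ} (hw : 0 < w.re) {x : ℂ} (hx : 0 < x.re) :
    ∫ t : ℝ in Ioi 0, (t : ℂ) ^ (w - 1) * Complex.exp (-x * t) =
      Complex.Gamma w * x ^ (-w) := by
  set U : Set ℂ := {z : ℂ | 0 < z.re} with hU_def
  have hUopen : IsOpen U := isOpen_lt continuous_const Complex.continuous_re
  have hUconn : IsPreconnected U := (convex_halfSpace_re_gt 0).isPreconnected
  set F : ℂ → ℂ := fun x => ∫ t : ℝ in Ioi 0, (t : ℂ) ^ (w - 1) * Complex.exp (-x * t) with hF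
  set G : ℂ → ℂ := fun x => Complex.Gamma w * x ^ (-w) with hG
  have hFdiff : DifferentiableOn ℂ F U := by
    intro z hz
    exact (diffAux hw hz).differentiableWithinAt
  have hFan : AnalyticOnNhd ℂ F U := hFdiff.analyticOnNhd hUopen
  have hGan : AnalyticOnNhd ℂ G U := by
    apply DifferentiableOn.analyticOnNhd _ hUopen
    intro z hz
    exact ((differentiableAt_id.cpow (differentiableAt_const _)
      (Or.inl hz)).const_mul (Complex.Gamma w)).differentiableWithinAt
  have h1U : (1 : ℂ) ∈ U := by simp [hU_def]
  have hfreq : ∃ᶠ z in nhdsWithin (1 : ℂ) {(1 : ℂ)}ᶜ, F z = G z := by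
    have htend : Tendsto (fun n : ℕ => ((1 + ((n : ℝ) + 1)⁻¹ : ℝ) : ℂ)) atTop
        (nhdsWithin (1 : ℂ) {(1 : ℂ)}ᶜ) := by
      rw [tendsto_nhdsWithin_iff]
      constructor
      · have : Tendsto (fun n : ℕ => (1 + ((n : ℝ) + 1)⁻¹ : ℝ)) atTop (nhds 1) := by
          have := tendsto_one_div_add_atTop_nhds_zero_nat (𝕜 := ℝ)
          simp only [one_div] at this
          simpa using tendsto_const_nhds.add this
        exact (Complex.continuous_ofReal.tendsto 1).comp this
      · filter_upwards with n
        simp only [mem_compl_iff, mem_singleton_iff]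
        intro h
        have : (1 + ((n : ℝ) + 1)⁻¹ : ℝ) = 1 := by exact_mod_cast h
        have hpos : (0 : ℝ) < ((n : ℝ) + 1)⁻¹ := by positivity
        linarith
    refine htend.frequently (Filter.Frequently.of_forall fun n => ?_)
    have hrpos : (0 : ℝ) < 1 + ((n : ℝ) + 1)⁻¹ := by positivity
    exact real_case hw hrpos
  exact hFan.eqOn_of_preconnected_of_frequently_eq hGan hUconn h1U hfreq hx

end MellinExpAux

open MellinExpAux

theorem mellin_inversion_exp (x : ℂ) (hx : 0 < x.re) (c : ℝ) (hc : 0 < c) :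
    Complex.exp (-x) =
      (1 / (2 * Real.pi)) * ∫ t : ℝ, Complex.Gamma (c + t * I) * x ^ (-(c + t * I) : ℂ) := by
  set f : ℝ → ℂ := fun t => Complex.exp (-x * t) with hf_def
  have hmel : ∀ w : ℂ, 0 < w.re → mellin f w = Complex.Gamma w * x ^ (-w) := by
    intro w hw
    rw [mellin]
    simp only [smul_eq_mul, hf_def]
    exact key hw hx
  have hline : ∀ t : ℝ, ((c : ℂ) + t * I).re = c := by
    intro t; simp
  have hlinepos : ∀ t : ℝ, 0 < ((c : ℂ) + t * I).re := fun t => by rw [hline t]; exact hc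
  -- Mellin convergence
  have hconv : MellinConvergent f c := by
    unfold MellinConvergent
    simp only [smul_eq_mul, hf_def]
    exact integrableAux (by simpa using hc) hx
  -- Vertical integrability
  have hvert : Complex.VerticalIntegrable (mellin f) c := by
    unfold Complex.VerticalIntegrable
    have heq : ∀ t : ℝ, mellin f ((c : ℂ) + t * I)
        = Complex.Gamma ((c : ℂ) + t * I) * x ^ (-((c : ℂ) + t * I)) :=
      fun t => hmel _ (hlinepos t)
    -- bound constant
    set M : ℝ := (∫ u : ℝ in Ioi 0, u ^ (c + 1) * Real.exp (-x.re * u)) * (‖x‖) ^ 2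
      with hM_def
    -- on |t| ≥ 1 the norm is ≤ M / t ^ 2
    have hbound : ∀ t : ℝ, 1 ≤ |t| →
        ‖Complex.Gamma ((c : ℂ) + t * I) * x ^ (-((c : ℂ) + t * I))‖
          ≤ M * |t| ^ (-2 : ℝ) := by
      intro t ht
      set w : ℂ := (c : ℂ) + t * I with hw_def
      have hwre : 0 < w.re := hlinepos t
      have hw2re : 0 < (w + 2).re := by simp only [Complex.add_re]; norm_num; linarith
      have hwne : w ≠ 0 := fun h => by simp [h] at hwre
      have hw1ne : w + 1 ≠ 0 := fun h => by
        have : (w + 1).re = 0 := by rw [h]; simp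
        simp only [Complex.add_re, Complex.one_re] at this
        linarith
      -- Gamma recursion: Gamma (w+2) = (w+1) * w * Gamma w
      have hrec : Complex.Gamma (w + 2) = (w + 1) * (w * Complex.Gamma w) := by
        have h1 : Complex.Gamma (w + 1) = w * Complex.Gamma w := Complex.Gamma_add_one w hwne
        have h2 : Complex.Gamma (w + 1 + 1) = (w + 1) * Complex.Gamma (w + 1) :=
          Complex.Gamma_add_one (w + 1) hw1ne
        rw [show w + 2 = w + 1 + 1 by ring, h2, h1]
      -- x ^ (-w) = x ^ (-(w+2)) * x ^ 2
      have hxne : x ≠ 0 := fun h => by simp [h] at hx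
      have hxpow : x ^ (-w) = x ^ (-(w + 2) : ℂ) * x ^ (2 : ℕ) := by
        rw [← Complex.cpow_natCast x 2, ← Complex.cpow_add _ _ hxne]
        congr 1
        push_cast
        ring
      -- bound on Gamma (w+2) * x^(-(w+2))
      have hkey2 : Complex.Gamma (w + 2) * x ^ (-(w + 2) : ℂ)
          = ∫ u : ℝ in Ioi 0, (u : ℂ) ^ (w + 2 - 1) * Complex.exp (-x * u) :=
        (key hw2re hx).symm
      have hbnd2 : ‖Complex.Gamma (w + 2) * x ^ (-(w + 2) : ℂ)‖
          ≤ ∫ u : ℝ in Ioi 0, u ^ (c + 1) * Real.exp (-x.re * u) := by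
        rw [hkey2]
        refine (norm_integral_le_integral_norm _).trans ?_
        apply le_of_eq
        apply setIntegral_congr_fun measurableSet_Ioi
        intro u hu
        simp only []
        rw [norm_integrand hu]
        have hre2 : (w + 2).re = c + 2 := by rw [hw_def]; simp
        rw [hre2]
        ring_nf
      -- put it together
      have hfactor : Complex.Gamma w * x ^ (-w)
          = (Complex.Gamma (w + 2) * x ^ (-(w + 2) : ℂ)) * (x ^ (2 : ℕ) / ((w + 1) * w)) := by
        rw [hxpow, hrec]
        field_simp
      have hM0nonneg : 0 ≤ ∫ u : ℝ in Ioi 0, u ^ (c + 1) * Real.exp (-x.re * u) := by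
        apply setIntegral_nonneg measurableSet_Ioi
        intro u hu
        have hu' : (0 : ℝ) < u := hu
        positivity
      have htpos : (0 : ℝ) < |t| := by linarith
      have habs_w : |t| ≤ ‖w‖ := by
        have := Complex.abs_im_le_norm w
        simp only [hw_def] at this ⊢
        simpa using this
      have habs_w1 : |t| ≤ ‖w + 1‖ := by
        have := Complex.abs_im_le_norm (w + 1)
        simp only [hw_def] at this ⊢
        simpa using this
      have hden : |t| * |t| ≤ ‖w + 1‖ * ‖w‖ :=
        mul_le_mul habs_w1 habs_w htpos.le (norm_nonneg _)
      have hnormeq : ‖(Complex.Gamma (w + 2) * x ^ (-(w + 2) : ℂ)) * (x ^ (2 : ℕ) / ((w + 1) * w))‖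
          = ‖Complex.Gamma (w + 2) * x ^ (-(w + 2) : ℂ)‖ * (‖x‖ ^ 2)
            / (‖w + 1‖ * ‖w‖) := by
        rw [norm_mul (Complex.Gamma (w + 2) * x ^ (-(w + 2) : ℂ)), norm_div,
          norm_pow, norm_mul (w + 1) w]
        ring
      rw [hfactor, hnormeq]
      have hstep : ‖Complex.Gamma (w + 2) * x ^ (-(w + 2) : ℂ)‖ * ‖x‖ ^ 2
            / (‖w + 1‖ * ‖w‖)
          ≤ (∫ u : ℝ in Ioi 0, u ^ (c + 1) * Real.exp (-x.re * u)) * ‖x‖ ^ 2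
            / (|t| * |t|) := by
        apply div_le_div₀ (by positivity)
          (mul_le_mul hbnd2 le_rfl (by positivity) hM0nonneg)
          (mul_pos htpos htpos) hden
      refine hstep.trans (le_of_eq ?_)
      rw [hM_def, Real.rpow_neg (abs_nonneg t),
        show ((2 : ℝ)) = ((2 : ℕ) : ℝ) by norm_num, Real.rpow_natCast]
      rw [div_eq_mul_inv]
      congr 1
      ring
    -- continuity of the integrand in t
    have hcont : Continuous fun t : ℝ =>
        Complex.Gamma ((c : ℂ) + t * I) * x ^ (-((c : ℂ) + t * I)) := by
      have hxne : x ≠ 0 := fun h => by simp [h] at hx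
      have hline_cont : Continuous fun t : ℝ => (c : ℂ) + t * I :=
        continuous_const.add (Complex.continuous_ofReal.mul continuous_const)
      apply Continuous.mul
      · apply ContinuousOn.comp_continuous
          (s := {z : ℂ | 0 < z.re}) ?_ hline_cont (fun t => hlinepos t)
        intro z hz
        simp only [Set.mem_setOf_eq] at hz
        refine (Complex.differentiableAt_Gamma z ?_).continuousAt.continuousWithinAt
        intro m h
        rw [h] at hz
        have hm : (0 : ℝ) ≤ (m : ℝ) := Nat.cast_nonneg m
        simp only [Complex.neg_re, Complex.natCast_re] at hz
        linarith
      · have hcc : Continuous fun t : ℝ => -((c : ℂ) + t * I) := hline_cont.neg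
        exact hcc.const_cpow (Or.inl hxne)
    have hcong : (fun t : ℝ => mellin f ((c : ℂ) + t * I))
        = fun t : ℝ => Complex.Gamma ((c : ℂ) + t * I) * x ^ (-((c : ℂ) + t * I)) :=
      funext heq
    rw [hcong]
    -- split into |t| ≤ 1 and |t| ≥ 1
    have hInt1 : IntegrableOn
        (fun t : ℝ => Complex.Gamma ((c : ℂ) + t * I) * x ^ (-((c : ℂ) + t * I)))
        (Icc (-1 : ℝ) 1) := hcont.integrableOn_Icc
    have hIntIoi : IntegrableOn
        (fun t : ℝ => Complex.Gamma ((c : ℂ) + t * I) * x ^ (-((c : ℂ) + t * I)))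
        (Ioi (1 : ℝ)) := by
      have hmaj : IntegrableOn (fun t : ℝ => M * |t| ^ (-2 : ℝ)) (Ioi 1) := by
        apply Integrable.const_mul
        have : IntegrableOn (fun t : ℝ => t ^ (-2 : ℝ)) (Ioi 1) := by
          rw [integrableOn_Ioi_rpow_iff one_pos]
          norm_num
        apply this.congr_fun _ measurableSet_Ioi
        intro t ht
        simp only []
        rw [abs_of_pos (lt_trans one_pos ht)]
      refine hmaj.integrable.mono' (hcont.aestronglyMeasurable.restrict) ?_
      filter_upwards [ae_restrict_mem measurableSet_Ioi] with t ht
      exact hbound t (by rw [abs_of_pos (lt_trans one_pos ht)]; exact le_of_lt ht)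
    have hIntIio : IntegrableOn
        (fun t : ℝ => Complex.Gamma ((c : ℂ) + t * I) * x ^ (-((c : ℂ) + t * I)))
        (Iio (-1 : ℝ)) := by
      have hmaj : IntegrableOn (fun t : ℝ => M * |t| ^ (-2 : ℝ)) (Iio (-1)) := by
        apply Integrable.const_mul
        have h1 : IntegrableOn (fun t : ℝ => t ^ (-2 : ℝ)) (Ioi 1) := by
          rw [integrableOn_Ioi_rpow_iff one_pos]
          norm_num
        have h1' : Integrable ((Ioi (1 : ℝ)).indicator fun t => t ^ (-2 : ℝ)) :=
          (integrable_indicator_iff measurableSet_Ioi).mpr h1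
        have h2' : Integrable fun t : ℝ =>
            (Ioi (1 : ℝ)).indicator (fun u => u ^ (-2 : ℝ)) (-t) := h1'.comp_neg
        have h2 : IntegrableOn (fun t : ℝ => (-t) ^ (-2 : ℝ)) (Iio (-1)) := by
          apply (h2'.integrableOn).congr_fun _ measurableSet_Iio
          intro t ht
          simp only []
          rw [Set.indicator_of_mem]
          exact mem_Ioi.mpr (by have h := mem_Iio.mp ht; linarith)
        apply h2.congr_fun _ measurableSet_Iio
        intro t ht
        simp only []
        rw [abs_of_neg (lt_trans ht (by norm_num))]
      refine hmaj.integrable.mono' (hcont.aestronglyMeasurable.restrict) ?_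
      filter_upwards [ae_restrict_mem measurableSet_Iio] with t ht
      refine hbound t ?_
      rw [abs_of_neg (lt_trans ht (by norm_num))]
      have h := mem_Iio.mp ht
      linarith
    have hunion : (Iio (-1 : ℝ) ∪ (Icc (-1 : ℝ) 1 ∪ Ioi 1)) = univ := by
      ext t
      simp only [mem_union, mem_Iio, mem_Icc, mem_Ioi, mem_univ, iff_true]
      by_cases h1 : t < -1
      · exact Or.inl h1
      · by_cases h2 : t ≤ 1
        · exact Or.inr (Or.inl ⟨le_of_not_gt h1, h2⟩)
        · exact Or.inr (Or.inr (lt_of_not_ge h2))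
    rw [← integrableOn_univ, ← hunion]
    exact (hIntIio.union (hInt1.union hIntIoi))
  -- continuity of f at 1
  have hfc : ContinuousAt f 1 := by
    apply Continuous.continuousAt
    exact Complex.continuous_exp.comp (continuous_const.mul Complex.continuous_ofReal)
  have hinv := mellinInv_mellin_eq c f one_pos hconv hvert hfc
  rw [mellinInv] at hinv
  have hf1 : f 1 = Complex.exp (-x) := by simp [hf_def]
  rw [hf1] at hinv
  rw [← hinv]
  have hpow1 : ∀ t : ℝ, ((1 : ℝ) : ℂ) ^ (-((c : ℂ) + t * I)) = 1 := by
    intro t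
    rw [Complex.ofReal_one, Complex.one_cpow]
  have : (fun y : ℝ => ((1 : ℝ) : ℂ) ^ (-((c : ℂ) + y * I)) • mellin f ((c : ℂ) + y * I))
      = fun y : ℝ => Complex.Gamma ((c : ℂ) + y * I) * x ^ (-((c : ℂ) + y * I)) := by
    funext y
    rw [hpow1 y, one_smul, hmel _ (hlinepos y)]
  rw [this, real_smul]
  push_cast
  rfl
end
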